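/- The orientation of the graph obtained from the Chvátal graph by adding the two edges {1,3} and {2,4}, given by the arc set {1→12, 2→1, 3→1, 3→2, 3→8, 3→11, 4→1, 4→2, 4→3, 4→5, 4→10, 5→12, 6→2, 6→5, 6→7, 6→10, 7→1, 7→8, 7→11, 8→12, 9→2, 9→5, 9→8, 9→10, 10→11, 11→12}, is a semi-transitive orientation; in particular, the Chvátal graph with the two added edges {1,3} and {2,4} admits a semi-transitive orientation. -/

import Mathlib

/-- The edges of the Chvátal graph, with vertices labelled 1,…,12. -/
def chvatalEdgeList : List (ℕ × ℕ) :=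
  [(1,2),(1,4),(1,7),(1,12),(2,3),(2,6),(2,9),(3,4),(3,8),(3,11),(4,5),(4,10),
   (5,6),(5,9),(5,12),(6,7),(6,10),(7,8),(7,11),(8,9),(8,12),(9,10),(10,11),(11,12)]

/-- The Chvátal graph extended by the two edges {1,3} and {2,4},
on `Fin 12`, where the vertex `x : Fin 12` carries the label `x+1`. -/
def chvatalPlus : SimpleGraph (Fin 12) :=
  SimpleGraph.fromRel
    (fun x y => (x.val + 1, y.val + 1) ∈ chvatalEdgeList ++ [(1,3),(2,4)])

/-- The arcs of the orientation, as ordered pairs of labels in 1,…,12. -/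
def chvatalArcList : List (ℕ × ℕ) :=
  [(1,12),(2,1),(3,1),(3,2),(3,8),(3,11),(4,1),(4,2),(4,3),(4,5),(4,10),(5,12),
   (6,2),(6,5),(6,7),(6,10),(7,1),(7,8),(7,11),(8,12),(9,2),(9,5),(9,8),(9,10),
   (10,11),(11,12)]

/-- The arc relation of the orientation on `Fin 12` (labels shifted by one). -/
def chvatalOrient (x y : Fin 12) : Prop :=
  (x.val + 1, y.val + 1) ∈ chvatalArcList

/-- A binary relation (arc set) is a semi-transitive orientation if it is acyclic and,
for every directed path `p 0 → p 1 → ⋯ → p k` with `k ≥ 2`, either there is no arc from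
`p 0` to `p k`, or the arc `p i → p j` is present for all `i < j ≤ k`. -/
def SemiTransitive {V : Type*} (A : V → V → Prop) : Prop :=
  (∀ v : V, ¬ Relation.TransGen A v v) ∧
  (∀ k : ℕ, 2 ≤ k → ∀ p : ℕ → V, (∀ i < k, A (p i) (p (i + 1))) →
    A (p 0) (p k) → ∀ i j : ℕ, i < j → j ≤ k → A (p i) (p j))

instance : DecidableRel chvatalOrient := fun _ _ => by
  unfold chvatalOrient; infer_instance

/-- Hardcoded transitive closure of the arc relation. -/
def chvatalTCList : List (ℕ × ℕ) :=
  [(1,12),(2,1),(2,12),(3,1),(3,2),(3,8),(3,11),(3,12),(4,1),(4,2),(4,3),(4,5),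
   (4,8),(4,10),(4,11),(4,12),(5,12),(6,1),(6,2),(6,5),(6,7),(6,8),(6,10),(6,11),
   (6,12),(7,1),(7,8),(7,11),(7,12),(8,12),(9,1),(9,2),(9,5),(9,8),(9,10),(9,11),
   (9,12),(10,11),(10,12),(11,12)]

def Tb (x y : Fin 12) : Prop := (x.val + 1, y.val + 1) ∈ chvatalTCList

instance : DecidableRel Tb := fun _ _ => by unfold Tb; infer_instance

def Rb (x y : Fin 12) : Prop := x = y ∨ Tb x y

instance : DecidableRel Rb := fun _ _ => by unfold Rb; infer_instance

/-- Topological rank. -/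
def rk (x : Fin 12) : ℕ := [10,9,6,3,5,1,2,7,0,4,8,11].getD x.val 0

lemma arc_sub_Tb : ∀ x y, chvatalOrient x y → Tb x y := by decide
lemma Tb_step : ∀ x y z, chvatalOrient x y → Tb y z → Tb x z := by decide
lemma arc_rk : ∀ x y, chvatalOrient x y → rk x < rk y := by decide
lemma shortcut : ∀ a b c d, chvatalOrient a d → Rb a b → Tb b c → Rb c d →
    chvatalOrient b c := by decide

lemma transGen_sub_Tb {x y} (h : Relation.TransGen chvatalOrient x y) : Tb x y := by
  induction h using Relation.TransGen.head_induction_on with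
  | single h => exact arc_sub_Tb _ _ h
  | head h _ ih => exact Tb_step _ _ _ h ih

theorem stmt4 :
    (∀ x y : Fin 12, chvatalPlus.Adj x y ↔ (chvatalOrient x y ∨ chvatalOrient y x)) ∧
    SemiTransitive chvatalOrient := by
  constructor
  · intro x y
    rw [chvatalPlus, SimpleGraph.fromRel_adj]
    revert x y; decide
  constructor
  · intro v hv
    have : rk v < rk v := by
      have : ∀ x y, Relation.TransGen chvatalOrient x y → rk x < rk y := by
        intro x y h
        induction h with
        | single h => exact arc_rk _ _ h
        | tail _ h ih => exact ih.trans (arc_rk _ _ h)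
      exact this v v hv
    exact lt_irrefl _ this
  · intro k _ p hp h0k i j hij hjk
    have tg : ∀ a b : ℕ, a < b → b ≤ k → Relation.TransGen chvatalOrient (p a) (p b) := by
      intro a b hab hbk
      induction b with
      | zero => omega
      | succ b ih =>
        rcases Nat.lt_succ_iff_lt_or_eq.mp hab with h | h
        · exact (ih h (by omega)).tail (hp b (by omega))
        · subst h; exact Relation.TransGen.single (hp a (by omega))
    have rb : ∀ a b : ℕ, a ≤ b → b ≤ k → Rb (p a) (p b) := by
      intro a b hab hbk
      rcases Nat.lt_or_eq_of_le hab with h | h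
      · exact Or.inr (transGen_sub_Tb (tg a b h hbk))
      · exact Or.inl (by rw [h])
    exact shortcut (p 0) (p i) (p j) (p k) h0k
      (rb 0 i (Nat.zero_le _) (by omega))
      (transGen_sub_Tb (tg i j hij hjk)) (rb j k hjk le_rfl)
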